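/- Weighted Rejection Sampling is λ-decentralized with λ ≥ min_i w_i·(1 + F_i/p_i), where F_i is the sum of the M−1 smallest values among {p_j : j ≠ i}: for any M-subset M containing i, the voting power p_i/Σ_{j∈M} p_j is at most p_i/(p_i + F_i) ≤ (1/λ)·w_i. -/

import Mathlib

open Finset

lemma aux_F_nonneg {N : ℕ} (p : Fin N → ℝ) (hp : ∀ i, 0 < p i) (F : ℝ) {i : Fin N} {M : ℕ}
    (h : ∃ s : Finset (Fin N), s ⊆ Finset.univ.erase i ∧ s.card = M - 1 ∧ F = ∑ j ∈ s, p j) :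
    0 ≤ F := by
  obtain ⟨s, _, _, rfl⟩ := h
  exact Finset.sum_nonneg fun j _ => (hp j).le

theorem stmt_11 (N M : ℕ) (hN : 0 < N) (hM : 1 < M) (hMN : M ≤ N)
    (w p : Fin N → ℝ) (hw : ∀ i, 0 < w i) (hwsum : ∑ i, w i = 1)
    (hp : ∀ i, 0 < p i)
    (F : Fin N → ℝ)
    (hF : ∀ i, IsLeast
      {x : ℝ | ∃ s : Finset (Fin N), s ⊆ Finset.univ.erase i ∧ s.card = M - 1 ∧
        x = ∑ j ∈ s, p j} (F i)) :
    ∀ 𝓜 ∈ Finset.univ.powersetCard M, ∀ i ∈ 𝓜,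
      p i / ∑ j ∈ 𝓜, p j ≤ p i / (p i + F i) ∧
      p i / (p i + F i) ≤
        (1 / (Finset.univ.inf' ⟨⟨0, hN⟩, Finset.mem_univ _⟩
          (fun i => w i * (1 + F i / p i)))) * w i := by
  intro 𝓜 h𝓜 i hi
  have hcard := (Finset.mem_powersetCard.mp h𝓜).2
  have hF0 : ∀ j, 0 ≤ F j := fun j => aux_F_nonneg p hp _ (hF j).1
  have hpi := hp i
  have hpF : 0 < p i + F i := by have := hF0 i; linarith
  have hkey : p i + F i ≤ ∑ j ∈ 𝓜, p j := by
    have h1 : F i ≤ ∑ j ∈ 𝓜.erase i, p j := (hF i).2 ⟨𝓜.erase i,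
      fun x hx => by
        simp only [Finset.mem_erase, Finset.mem_univ, and_true]
        exact (Finset.mem_erase.mp hx).1,
      by rw [Finset.card_erase_of_mem hi, hcard], rfl⟩
    have h2 := Finset.add_sum_erase 𝓜 p hi
    linarith
  set L := Finset.univ.inf' ⟨⟨0, hN⟩, Finset.mem_univ _⟩ (fun i => w i * (1 + F i / p i)) with hLdef
  have hLle : L ≤ w i * (1 + F i / p i) := Finset.inf'_le _ (Finset.mem_univ i)
  have hLpos : 0 < L := by
    rw [hLdef]
    refine (Finset.lt_inf'_iff _).2 ?_
    intro j _
    have := hF0 j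
    have := hp j
    have := hw j
    positivity
  refine ⟨by gcongr, ?_⟩
  have hid : p i * (w i * (1 + F i / p i)) = w i * (p i + F i) := by
    field_simp
  have h3 : p i * L ≤ w i * (p i + F i) := by
    nlinarith [mul_le_mul_of_nonneg_left hLle hpi.le]
  rw [one_div, inv_mul_eq_div, div_le_div_iff₀ hpF hLpos]
  linarith
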